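/- Let α > 0. Any function u : [0,1] → ℝ (no measurability or regularity assumed) satisfying u(1-x) + (1-x)^α · u(y/(1-x)) = u(y) + (1-y)^α · u((1-x-y)/(1-y)) for all x, y ∈ [0,1) with x + y ≤ 1 satisfies u(x) = u(1-x) for every rational number x ∈ [0,1]. -/

import Mathlib

/-- Auxiliary difference function. -/
noncomputable def fdiff (u : ℝ → ℝ) (x : ℝ) : ℝ := u x - u (1 - x)

lemma fdiff_flip (u : ℝ → ℝ) (x : ℝ) : fdiff u (1 - x) = -(fdiff u x) := by
  simp [fdiff, sub_sub_cancel]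

lemma key_eq (α : ℝ) (u : ℝ → ℝ)
    (heq : ∀ x y : ℝ, 0 ≤ x → x < 1 → 0 ≤ y → y < 1 → x + y ≤ 1 →
      u (1 - x) + (1 - x) ^ α * u (y / (1 - x))
        = u y + (1 - y) ^ α * u ((1 - x - y) / (1 - y)))
    (x y : ℝ) (hx : 0 ≤ x) (hx1 : x < 1) (hy : 0 ≤ y) (hy1 : y < 1) (hxy : x + y ≤ 1) :
    fdiff u x + fdiff u y
      = (1 - x) ^ α * fdiff u (y / (1 - x)) + (1 - y) ^ α * fdiff u (x / (1 - y)) := by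
  have hx0 : (1 : ℝ) - x ≠ 0 := by linarith
  have hy0 : (1 : ℝ) - y ≠ 0 := by linarith
  have A := heq x y hx hx1 hy hy1 hxy
  have B := heq y x hy hy1 hx hx1 (by linarith)
  have e1 : (1 - x - y) / (1 - y) = 1 - x / (1 - y) := by field_simp; ring
  have e2 : (1 - y - x) / (1 - x) = 1 - y / (1 - x) := by field_simp; ring
  rw [e1] at A
  rw [e2] at B
  simp only [fdiff]
  linear_combination -A - B

lemma main_ind (α : ℝ) (u : ℝ → ℝ) (hu01 : u 0 = u 1)
    (heq : ∀ x y : ℝ, 0 ≤ x → x < 1 → 0 ≤ y → y < 1 → x + y ≤ 1 →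
      u (1 - x) + (1 - x) ^ α * u (y / (1 - x))
        = u y + (1 - y) ^ α * u ((1 - x - y) / (1 - y))) :
    ∀ n p : ℕ, p ≤ n → fdiff u ((p : ℝ) / (n : ℝ)) = 0 := by
  have hf0 : fdiff u 0 = 0 := by simp [fdiff, hu01]
  -- helper: the case `2*p ≤ n`, given the inductive hypothesis for smaller denominators
  have helper : ∀ n : ℕ, (∀ m : ℕ, m < n → ∀ q : ℕ, q ≤ m → fdiff u ((q : ℝ) / (m : ℝ)) = 0) →
      ∀ p : ℕ, p ≤ n → 2 * p ≤ n → fdiff u ((p : ℝ) / (n : ℝ)) = 0 := by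
    intro n ih p hpn h2p
    rcases Nat.eq_zero_or_pos p with hp0 | hp1
    · simpa [hp0] using hf0
    have hn0 : (0 : ℝ) < (n : ℝ) := by
      have : 0 < n := by omega
      exact_mod_cast this
    have hpltn : p < n := by omega
    set x : ℝ := (p : ℝ) / (n : ℝ) with hxdef
    have hx : 0 ≤ x := by positivity
    have hx1 : x < 1 := by
      rw [hxdef, div_lt_one hn0]; exact_mod_cast hpltn
    have hxx : x + x ≤ 1 := by
      rw [hxdef, ← add_div, div_le_one hn0]
      have : ((2 * p : ℕ) : ℝ) ≤ (n : ℕ) := by exact_mod_cast h2p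
      push_cast at this; linarith
    have K := key_eq α u heq x x hx hx1 hx hx1 hxx
    have hnp : ((n - p : ℕ) : ℝ) = (n : ℝ) - (p : ℝ) := by
      exact Nat.cast_sub hpn
    have hnpne : (n : ℝ) - (p : ℝ) ≠ 0 := by
      have : (p : ℝ) < (n : ℝ) := by exact_mod_cast hpltn
      linarith
    have hxval : x / (1 - x) = (p : ℝ) / ((n - p : ℕ) : ℝ) := by
      rw [hnp, hxdef]
      field_simp
    have hsmall : fdiff u ((p : ℝ) / ((n - p : ℕ) : ℝ)) = 0 := by
      exact ih (n - p) (by omega) p (by omega)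
    rw [hxval, hsmall, mul_zero] at K
    linarith
  intro n
  induction n using Nat.strong_induction_on with
  | _ n ih =>
    intro p hpn
    by_cases h2p : 2 * p ≤ n
    · exact helper n ih p hpn h2p
    · -- use f(p/n) = -f((n-p)/n)
      have hn0 : (0 : ℝ) < (n : ℝ) := by
        have : 0 < n := by omega
        exact_mod_cast this
      have hother : fdiff u (((n - p : ℕ) : ℝ) / (n : ℝ)) = 0 :=
        helper n ih (n - p) (by omega) (by omega)
      have hrw : (p : ℝ) / (n : ℝ) = 1 - ((n - p : ℕ) : ℝ) / (n : ℝ) := by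
        have hnp : ((n - p : ℕ) : ℝ) = (n : ℝ) - (p : ℝ) := by
          exact Nat.cast_sub hpn
        rw [hnp]
        field_simp
        ring
      rw [hrw, fdiff_flip, hother, neg_zero]

/-- For `α > 0`, any solution `u : [0,1] → ℝ` of the fundamental functional equation
(no measurability assumed) satisfies `u(x) = u(1-x)` for all rational `x ∈ [0,1]`. -/
theorem stmt4 (α : ℝ) (hα : 0 < α) (u : ℝ → ℝ)
    (heq : ∀ x y : ℝ, 0 ≤ x → x < 1 → 0 ≤ y → y < 1 → x + y ≤ 1 →
      u (1 - x) + (1 - x) ^ α * u (y / (1 - x))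
        = u y + (1 - y) ^ α * u ((1 - x - y) / (1 - y))) :
    ∀ q : ℚ, 0 ≤ (q : ℝ) → (q : ℝ) ≤ 1 → u (q : ℝ) = u (1 - (q : ℝ)) := by
  -- first: u 0 = u 1
  have hu01 : u 0 = u 1 := by
    have H := heq (1/2) (1/2) (by norm_num) (by norm_num) (by norm_num) (by norm_num)
      (by norm_num)
    norm_num at H
    rcases H with h | h
    · exact h.symm
    · exfalso
      have hpos : (0 : ℝ) < (1/2 : ℝ) ^ α := by positivity
      rw [h] at hpos
      exact lt_irrefl 0 hpos
  intro q hq0 hq1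
  have hden : (0 : ℝ) < (q.den : ℝ) := by exact_mod_cast q.pos
  have hcast : (q : ℝ) = (q.num : ℝ) / (q.den : ℝ) := by rw [Rat.cast_def]
  have hq0' : (0 : ℚ) ≤ q := by exact_mod_cast hq0
  have hnum0 : 0 ≤ q.num := Rat.num_nonneg.mpr hq0'
  have hq1' : (q.num : ℝ) / (q.den : ℝ) ≤ 1 := by rw [← hcast]; exact hq1
  have h1 : (q.num : ℝ) ≤ (q.den : ℝ) := (div_le_one hden).mp hq1'
  have hnumden : q.num ≤ (q.den : ℤ) := by exact_mod_cast h1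
  have hcast2 : (q : ℝ) = ((q.num.toNat : ℕ) : ℝ) / ((q.den : ℕ) : ℝ) := by
    rw [hcast]
    congr 1
    exact_mod_cast (Int.toNat_of_nonneg hnum0).symm
  have hple : q.num.toNat ≤ q.den := by omega
  have hmain := main_ind α u hu01 heq q.den q.num.toNat hple
  rw [← hcast2] at hmain
  simpa [fdiff, sub_eq_zero] using hmain
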